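/- Removal of inputs implies termination-insensitive non-interference: every program π of the while-language that satisfies removal of inputs also satisfies termination-insensitive non-interference. -/

import Mathlib

namespace MapReduce

/-- Security levels: high (`H`) and low (`L`). -/
inductive SecLevel
  | H | L
deriving DecidableEq

/-- Channels (input/output channels, identified by names). -/
abbrev Chan := String

/-- Values: booleans and non-negative integers. -/
inductive Val
  | bool (b : Bool)
  | nat (n : ℕ)
deriving DecidableEq

/-- An input/output vector, defined (≠ ⊥) on exactly one channel. -/
structure Vec where
  ch : Chan
  val : Val
deriving DecidableEq

/-- Queues of vectors. -/
abbrev Queue := List Vec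

/-- `Q|_c`: the subsequence of vectors of `Q` defined on channel `c`. -/
def restrictC (Q : Queue) (c : Chan) : Queue :=
  Q.filter (fun v => decide (v.ch = c))

/-- `Q|_l`: the subsequence of vectors of `Q` defined on a channel of level `l`. -/
def restrictL (lvl : Chan → SecLevel) (Q : Queue) (l : SecLevel) : Queue :=
  Q.filter (fun v => decide (lvl v.ch = l))

/-- Low equality `Q =_L Q'`. -/
def lowEq (lvl : Chan → SecLevel) (Q Q' : Queue) : Prop :=
  restrictL lvl Q SecLevel.L = restrictL lvl Q' SecLevel.L

/-- `dequeue Q c`: the value of the first vector of `Q` defined on channel `c`,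
together with the queue obtained by removing that vector (or `none`). -/
def dequeue : Queue → Chan → Option (Val × Queue)
  | [], _ => none
  | v :: Q, c =>
    if v.ch = c then some (v.val, Q)
    else (dequeue Q c).map (fun p => (p.1, v :: p.2))

abbrev Var := String

inductive Expr
  | var (x : Var)
  | const (v : Val)
deriving DecidableEq

abbrev Mem := Var → Val

def Expr.eval (m : Mem) : Expr → Val
  | .var x => m x
  | .const v => v

/-- The initial memory, mapping every variable to the initial value. -/
def Mem.init : Mem := fun _ => Val.nat 0

/-- The while-language of controlled programs. -/
inductive Prog
  | assign (x : Var) (e : Expr)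
  | seq (p q : Prog)
  | ite (e : Expr) (p q : Prog)
  | while (e : Expr) (p : Prog)
  | skip
  | input (x : Var) (c : Chan)
  | output (e : Expr) (c : Chan)
deriving DecidableEq

/-- Configurations of controlled programs. -/
structure PConf where
  prg : Prog
  mem : Mem
  inq : Queue
  outq : Queue

/-- Small-step semantics of controlled programs. -/
inductive PStep : PConf → PConf → Prop
  | assign : PStep ⟨.assign x e, m, I, O⟩ ⟨.skip, Function.update m x (e.eval m), I, O⟩
  | seqStep : PStep ⟨p, m, I, O⟩ ⟨p', m', I', O'⟩ →
      PStep ⟨.seq p q, m, I, O⟩ ⟨.seq p' q, m', I', O'⟩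
  | seqSkip : PStep ⟨.seq .skip q, m, I, O⟩ ⟨q, m, I, O⟩
  | iteT : e.eval m = .bool true → PStep ⟨.ite e p q, m, I, O⟩ ⟨p, m, I, O⟩
  | iteF : e.eval m = .bool false → PStep ⟨.ite e p q, m, I, O⟩ ⟨q, m, I, O⟩
  | whileT : e.eval m = .bool true →
      PStep ⟨.while e p, m, I, O⟩ ⟨.seq p (.while e p), m, I, O⟩
  | whileF : e.eval m = .bool false → PStep ⟨.while e p, m, I, O⟩ ⟨.skip, m, I, O⟩
  | inp : dequeue I c = some (v, I') →
      PStep ⟨.input x c, m, I, O⟩ ⟨.skip, Function.update m x v, I', O⟩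
  | out : PStep ⟨.output e c, m, I, O⟩ ⟨.skip, m, I, O ++ [⟨c, e.eval m⟩]⟩

/-- `π(I) ⇓ O`: the program terminates with the input queue completely consumed
and output queue `O`. -/
def BigStep (p : Prog) (I O : Queue) : Prop :=
  ∃ m, Relation.ReflTransGen PStep ⟨p, Mem.init, I, []⟩ ⟨.skip, m, [], O⟩

/-- Termination-insensitive non-interference. -/
def TINI (lvl : Chan → SecLevel) (p : Prog) : Prop :=
  ∀ I I' O O', lowEq lvl I I' → BigStep p I O → BigStep p I' O' → lowEq lvl O O'

/-- Termination-sensitive non-interference. -/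
def TSNI (lvl : Chan → SecLevel) (p : Prog) : Prop :=
  ∀ I I' O, lowEq lvl I I' → BigStep p I O →
    ∃ O', BigStep p I' O' ∧ lowEq lvl O' O

/-- Removal of inputs, at a fixed choice of the default value. -/
def RIat (lvl : Chan → SecLevel) (vdef : Val) (p : Prog) : Prop :=
  ∀ I O, BigStep p I O →
    ∃ I' O', lowEq lvl I' I ∧
      (∀ v ∈ I', lvl v.ch = SecLevel.H → v.val = vdef) ∧
      (∀ c, (restrictC I' c).length ≤ (restrictC I c).length) ∧
      BigStep p I' O' ∧ lowEq lvl O' O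

/-- Removal of inputs (for every choice of the default value). -/
def RI (lvl : Chan → SecLevel) (p : Prog) : Prop := ∀ vdef, RIat lvl vdef p

/-- Deletion of inputs, at a fixed choice of the default value. -/
def DIat (lvl : Chan → SecLevel) (vdef : Val) (p : Prog) : Prop :=
  ∀ (I1 : Queue) (v : Vec) (I2 : Queue) (O : Queue), lvl v.ch = SecLevel.H →
    (∀ w ∈ I2, lvl w.ch = SecLevel.H → w.val = vdef) →
    BigStep p (I1 ++ v :: I2) O →
    ∃ I1' I2' O', lowEq lvl (I1' ++ I2') (I1 ++ v :: I2) ∧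
      (∀ w ∈ I2', lvl w.ch = SecLevel.H → w.val = vdef) ∧
      BigStep p (I1' ++ I2') O' ∧ lowEq lvl O' O

/-- Deletion of inputs (for every choice of the default value). -/
def DI (lvl : Chan → SecLevel) (p : Prog) : Prop := ∀ vdef, DIat lvl vdef p

/-! ### The enforcement mechanism -/

/-- Interrupt signals: input request or output request on a channel. -/
inductive Sig
  | inSig (c : Chan)
  | outSig (c : Chan)
deriving DecidableEq

/-- States of a local execution: executing or sleeping. -/
inductive LState
  | E | S
deriving DecidableEq

/-- Configuration of a local execution (with instrumentation recording the
items it has received from MAP and the items it has consumed). -/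
structure LocalConf where
  stt : LState
  intr : Option Sig
  prg : Prog
  mem : Mem
  inq : Queue
  outq : Queue
  /-- instrumentation: items delivered by MAP to this local input queue, in order -/
  received : Queue
  /-- instrumentation: items consumed from the local input queue, in order -/
  consumed : Queue

instance : Inhabited LocalConf :=
  ⟨⟨.E, none, .skip, Mem.init, [], [], [], []⟩⟩

def LocalConf.init (p : Prog) : LocalConf :=
  ⟨.E, none, p, Mem.init, [], [], [], []⟩

/-- Semantics of local executions (rules LINP1, LINP2, LOUTP and the standard
rules, executed only in state `E` with no pending signal). -/
inductive LStep : LocalConf → LocalConf → Prop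
  | assign : LStep ⟨.E, none, .assign x e, m, I, O, r, cs⟩
      ⟨.E, none, .skip, Function.update m x (e.eval m), I, O, r, cs⟩
  | seqStep : LStep ⟨.E, none, p, m, I, O, r, cs⟩ ⟨st, sg, p', m', I', O', r', cs'⟩ →
      LStep ⟨.E, none, .seq p q, m, I, O, r, cs⟩ ⟨st, sg, .seq p' q, m', I', O', r', cs'⟩
  | seqSkip : LStep ⟨.E, none, .seq .skip q, m, I, O, r, cs⟩ ⟨.E, none, q, m, I, O, r, cs⟩
  | iteT : e.eval m = .bool true →
      LStep ⟨.E, none, .ite e p q, m, I, O, r, cs⟩ ⟨.E, none, p, m, I, O, r, cs⟩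
  | iteF : e.eval m = .bool false →
      LStep ⟨.E, none, .ite e p q, m, I, O, r, cs⟩ ⟨.E, none, q, m, I, O, r, cs⟩
  | whileT : e.eval m = .bool true →
      LStep ⟨.E, none, .while e p, m, I, O, r, cs⟩
        ⟨.E, none, .seq p (.while e p), m, I, O, r, cs⟩
  | whileF : e.eval m = .bool false →
      LStep ⟨.E, none, .while e p, m, I, O, r, cs⟩ ⟨.E, none, .skip, m, I, O, r, cs⟩
  | inp1 : dequeue I c = some (v, I') →
      LStep ⟨.E, none, .input x c, m, I, O, r, cs⟩
        ⟨.E, none, .skip, Function.update m x v, I', O, r, cs ++ [⟨c, v⟩]⟩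
  | inp2 : dequeue I c = none →
      LStep ⟨.E, none, .input x c, m, I, O, r, cs⟩
        ⟨.S, some (.inSig c), .input x c, m, I, O, r, cs⟩
  | out : LStep ⟨.E, none, .output e c, m, I, O, r, cs⟩
      ⟨.S, some (.outSig c), .skip, m, I, O ++ [⟨c, e.eval m⟩], r, cs⟩

/-- The three enforcement mechanisms. -/
inductive Mech
  | NI | RI | DI
deriving DecidableEq

/-- Ask privilege of execution `i` on input channel `c`: MAP performs an actual
read of the global input queue for the request `(i, c)`. -/
def canAsk : Mech → (Chan → SecLevel) → ℕ → Chan → Prop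
  | .NI, lvl, i, c => (i = 0 ∧ lvl c = .H) ∨ (i = 1 ∧ lvl c = .L)
  | .RI, lvl, i, c => i = 1 ∨ (i = 0 ∧ lvl c = .H)
  | .DI, lvl, i, c => (i = 0 ∧ lvl c = .H) ∨ (i = 1 ∧ lvl c = .L)

/-- Requests answered by MAP with the default value, without consuming global input. -/
def defaultAnswer : Mech → (Chan → SecLevel) → ℕ → Chan → Prop
  | .NI, lvl, i, c => i = 1 ∧ lvl c = .H
  | .RI, _, _, _ => False
  | .DI, lvl, i, c => 1 ≤ i ∧ lvl c = .H

/-- Requests on which MAP only removes the signal (the requester keeps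
sleeping, waiting for the item to be read on behalf of another execution). -/
def skipAnswer : Mech → (Chan → SecLevel) → ℕ → Chan → Prop
  | .NI, lvl, i, c => i = 0 ∧ lvl c = .L
  | .RI, lvl, i, c => i = 0 ∧ lvl c = .L
  | .DI, lvl, i, c => i ≠ 1 ∧ lvl c = .L

/-- The channel of the first instruction to be executed, if it is an input. -/
def Prog.headInput : Prog → Option (Var × Chan)
  | .input x c => some (x, c)
  | .seq p _ => p.headInput
  | _ => none

/-- Send a vector to the local input queue of a local execution. -/
def sendTo (l : LocalConf) (v : Vec) : LocalConf :=
  { l with inq := l.inq ++ [v], received := l.received ++ [v] }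

/-- The channel the local execution is sleeping on (waiting for an input). -/
def LocalConf.waitChanI (l : LocalConf) : Option Chan :=
  if l.stt = LState.S then l.prg.headInput.map Prod.snd else none

/-- `isReady(c)`: the execution sleeps waiting for an input on `c` and the item is present. -/
def readyOn (l : LocalConf) (c : Chan) : Prop :=
  l.waitChanI = some c ∧ (dequeue l.inq c).isSome = true

instance (l : LocalConf) (c : Chan) : Decidable (readyOn l c) := by
  unfold readyOn; infer_instance

/-- `wake(isReady(c))` applied to a single local execution. -/
def wakeReadyOn (c : Chan) (l : LocalConf) : LocalConf :=
  if readyOn l c then { l with stt := .E, intr := none } else l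

/-- `wake(identical(i))` applied to the requester itself. -/
def wakeNow (l : LocalConf) : LocalConf := { l with stt := .E, intr := none }

/-- Distribution of a value read on channel `c`: the high execution (index 0)
always receives the real value; other executions receive the real value on low
channels and the default value on high channels (the `tell` privilege); then all
executions whose requested input is ready on `c` are woken. -/
def broadcast (lvl : Chan → SecLevel) (vdef : Val) (c : Chan) (v : Val)
    (locs : List LocalConf) : List LocalConf :=
  (locs.mapIdx (fun j l =>
      sendTo l ⟨c, if j = 0 ∨ lvl c = SecLevel.L then v else vdef⟩)).map (wakeReadyOn c)

/-- In the DI mechanism, a high-channel request of the high execution first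
clones the configuration of the high execution onto the stack (state `S`). -/
def preClone (M : Mech) (lvl : Chan → SecLevel) (i : ℕ) (c : Chan)
    (locs : List LocalConf) : List LocalConf :=
  if M = Mech.DI ∧ i = 0 ∧ lvl c = SecLevel.H then
    locs ++ [{ locs.headI with stt := LState.S, intr := none }]
  else locs

/-- Agents performing steps of the enforcement mechanism: a local execution,
MAP activated on an input request, or REDUCE activated on an output request. -/
inductive Agent
  | loc (i : ℕ)
  | mapA (i : ℕ) (c : Chan)
  | redA (i : ℕ) (c : Chan)
deriving DecidableEq

/-- Configuration of the enforcement mechanism (stack of local executions,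
global input and output queues, plus instrumentation recording the items
consumed from the global input queue, in order). -/
structure EMConf where
  locs : List LocalConf
  gin : Queue
  gout : Queue
  /-- instrumentation: items consumed from the global input queue, in order -/
  gconsumed : Queue

def EMConf.locAt (γ : EMConf) (i : ℕ) : LocalConf := γ.locs.getD i default

/-- Semantics of the enforcement mechanism, as the interleaving of atomic steps
of the local executions, of MAP, and of REDUCE.  MAP is activated on an input
interrupt signal; depending on the mechanism and the privilege tables it reads
the global input queue and broadcasts (rule `mapRead`, with cloning for DI),
answers with the default value (rule `mapDefault`), or does nothing beyond
removing the signal (rule `mapSkip`).  REDUCE is activated on an output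
interrupt signal; it forwards to the global output queue exactly the high
outputs of the high execution (index 0) and the low outputs of the low
execution (index 1), cleans the local output queue and wakes the requester. -/
inductive EMStep (M : Mech) (lvl : Chan → SecLevel) (vdef : Val) :
    Agent → EMConf → EMConf → Prop
  | locStep {γ : EMConf} {i : ℕ} {l l' : LocalConf} :
      γ.locs[i]? = some l → LStep l l' →
      EMStep M lvl vdef (.loc i) γ { γ with locs := γ.locs.set i l' }
  | mapRead {γ : EMConf} {i : ℕ} {c : Chan} {l : LocalConf} {v : Val} {gin' : Queue} :
      γ.locs[i]? = some l → l.stt = .S → l.intr = some (.inSig c) →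
      canAsk M lvl i c →
      dequeue γ.gin c = some (v, gin') →
      EMStep M lvl vdef (.mapA i c) γ
        { locs := broadcast lvl vdef c v
            (preClone M lvl i c (γ.locs.set i { l with intr := none })),
          gin := gin', gout := γ.gout, gconsumed := γ.gconsumed ++ [⟨c, v⟩] }
  | mapDefault {γ : EMConf} {i : ℕ} {c : Chan} {l : LocalConf} :
      γ.locs[i]? = some l → l.stt = .S → l.intr = some (.inSig c) →
      defaultAnswer M lvl i c →
      EMStep M lvl vdef (.mapA i c) γ
        { γ with locs := γ.locs.set i (wakeNow (sendTo { l with intr := none } ⟨c, vdef⟩)) }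
  | mapSkip {γ : EMConf} {i : ℕ} {c : Chan} {l : LocalConf} :
      γ.locs[i]? = some l → l.stt = .S → l.intr = some (.inSig c) →
      skipAnswer M lvl i c →
      EMStep M lvl vdef (.mapA i c) γ
        { γ with locs := γ.locs.set i { l with intr := none } }
  | red {γ : EMConf} {i : ℕ} {c : Chan} {l : LocalConf} {v : Val} {out' : Queue} :
      γ.locs[i]? = some l → l.stt = .S → l.intr = some (.outSig c) →
      dequeue l.outq c = some (v, out') →
      EMStep M lvl vdef (.redA i c) γ
        { γ with
          locs := γ.locs.set i { l with stt := .E, intr := none, outq := out' },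
          gout := γ.gout ++
            (if (i = 0 ∧ lvl c = SecLevel.H) ∨ (i = 1 ∧ lvl c = SecLevel.L)
             then [⟨c, v⟩] else []) }

/-- A step of the enforcement mechanism, by any agent. -/
def EMStepRel (M : Mech) (lvl : Chan → SecLevel) (vdef : Val) :
    EMConf → EMConf → Prop :=
  fun γ γ' => ∃ a, EMStep M lvl vdef a γ γ'

/-- Initial configuration: the high execution π[0] and the low execution π[1],
global input queue `I`, empty global output queue. -/
def EMConf.init (p : Prog) (I : Queue) : EMConf :=
  ⟨[LocalConf.init p, LocalConf.init p], I, [], []⟩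

/-- The enforcement mechanism has terminated: all local executions (as well as
the MAP and REDUCE programs, which are collapsed into atomic steps here) are
terminated and the global input queue has been consumed completely. -/
def EMConf.Terminal (γ : EMConf) : Prop :=
  (∀ l ∈ γ.locs, l.prg = Prog.skip) ∧ γ.gin = []

/-- `EM(π)(I) ⇓ O`. -/
def EMBigStep (M : Mech) (lvl : Chan → SecLevel) (vdef : Val)
    (p : Prog) (I O : Queue) : Prop :=
  ∃ γ, Relation.ReflTransGen (EMStepRel M lvl vdef) (EMConf.init p I) γ ∧
    γ.Terminal ∧ γ.gout = O

/-- Reachable configurations of `EM(π)` on global input `I`. -/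
def EMReach (M : Mech) (lvl : Chan → SecLevel) (vdef : Val)
    (p : Prog) (I : Queue) (γ : EMConf) : Prop :=
  Relation.ReflTransGen (EMStepRel M lvl vdef) (EMConf.init p I) γ

/-- A configuration from which no step is possible. -/
def EMStuck (M : Mech) (lvl : Chan → SecLevel) (vdef : Val) (γ : EMConf) : Prop :=
  ∀ a γ', ¬ EMStep M lvl vdef a γ γ'

/-- There is no infinite run of the enforcement mechanism from `γ0`
(termination under every scheduling of the local executions). -/
def NoInfiniteRun (M : Mech) (lvl : Chan → SecLevel) (vdef : Val) (γ0 : EMConf) : Prop :=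
  ¬ ∃ f : ℕ → EMConf, f 0 = γ0 ∧ ∀ n, EMStepRel M lvl vdef (f n) (f (n + 1))

end MapReduce

namespace MapReduce

/-- All high-channel vectors carry the default value. -/
def HighDef (lvl : Chan → SecLevel) (vdef : Val) (Q : Queue) : Prop :=
  ∀ v ∈ Q, lvl v.ch = SecLevel.H → v.val = vdef

lemma skip_no_step {m : Mem} {I O : Queue} {γ : PConf} : ¬ PStep ⟨.skip, m, I, O⟩ γ := by
  intro h; cases h

lemma dequeue_decomp : ∀ {I : Queue} {c : Chan} {v : Val} {I' : Queue},
    dequeue I c = some (v, I') →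
    ∃ pre post, I = pre ++ ⟨c, v⟩ :: post ∧ I' = pre ++ post ∧ ∀ w ∈ pre, w.ch ≠ c := by
  intro I
  induction I with
  | nil => intro c v I' h; simp [dequeue] at h
  | cons a Q ih =>
    intro c v I' h
    by_cases hc : a.ch = c
    · simp [dequeue, hc] at h
      refine ⟨[], Q, ?_, by simp [h.2], by simp⟩
      cases a with | mk ch val => simp_all
    · simp only [dequeue, hc, if_neg hc, if_false] at h
      cases hq : dequeue Q c with
      | none => rw [hq] at h; simp at h
      | some p =>
        rw [hq] at h
        cases p with | mk v0 Q' =>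
        simp at h
        obtain ⟨rfl, rfl⟩ := h
        obtain ⟨pre, post, h1, h2, h3⟩ := ih hq
        refine ⟨a :: pre, post, by simp [h1], by simp [h2], ?_⟩
        intro w hw
        rcases List.mem_cons.1 hw with rfl | hw
        · exact hc
        · exact h3 w hw

lemma dequeue_exists : ∀ {I : Queue} {c : Chan}, (∃ w ∈ I, w.ch = c) →
    ∃ v I', dequeue I c = some (v, I') := by
  intro I
  induction I with
  | nil => intro c h; simp at h
  | cons a Q ih =>
    intro c h
    by_cases hc : a.ch = c
    · exact ⟨a.val, Q, by simp [dequeue, hc]⟩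
    · obtain ⟨w, hw, hwc⟩ := h
      rcases List.mem_cons.1 hw with rfl | hw
      · exact absurd hwc hc
      · obtain ⟨v, I', hq⟩ := ih ⟨w, hw, hwc⟩
        exact ⟨v, a :: I', by simp [dequeue, hc, hq]⟩

lemma first_split {c : Chan} : ∀ {A A' B B' : Queue} {x x' : Vec},
    x.ch = c → x'.ch = c → (∀ w ∈ A, w.ch ≠ c) → (∀ w ∈ A', w.ch ≠ c) →
    A ++ x :: B = A' ++ x' :: B' → A = A' ∧ x = x' ∧ B = B' := by
  intro A
  induction A with
  | nil =>
    intro A' B B' x x' hx hx' _ hA' h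
    cases A' with
    | nil => simpa using h
    | cons a A' =>
      simp at h
      exact absurd (h.1 ▸ hx) (hA' a (by simp))
  | cons a A ih =>
    intro A' B B' x x' hx hx' hA hA' h
    cases A' with
    | nil =>
      simp at h
      exact absurd (h.1 ▸ hx') (hA a (by simp))
    | cons a' A' =>
      simp at h
      obtain ⟨rfl, h⟩ := h
      obtain ⟨h1, h2, h3⟩ := ih hx hx' (fun w hw => hA w (by simp [hw]))
        (fun w hw => hA' w (by simp [hw])) h
      exact ⟨by rw [h1], h2, h3⟩

lemma dequeue_subset {I : Queue} {c : Chan} {v : Val} {I' : Queue}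
    (h : dequeue I c = some (v, I')) : ∀ w ∈ I', w ∈ I := by
  obtain ⟨p, s, rfl, rfl, -⟩ := dequeue_decomp h
  intro w hw; simp at hw ⊢; tauto

lemma dequeue_low {lvl : Chan → SecLevel} {I1 I2 : Queue} {c : Chan} {v : Val} {I1' : Queue}
    (hc : lvl c = SecLevel.L) (hlow : lowEq lvl I1 I2)
    (h : dequeue I1 c = some (v, I1')) :
    ∃ I2', dequeue I2 c = some (v, I2') ∧ lowEq lvl I1' I2' := by
  obtain ⟨p1, s1, rfl, rfl, hp1⟩ := dequeue_decomp h
  have hmem : ∃ w ∈ I2, w.ch = c := by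
    have hv : (⟨c, v⟩ : Vec) ∈ restrictL lvl I2 SecLevel.L := by
      rw [show restrictL lvl I2 SecLevel.L = restrictL lvl (p1 ++ ⟨c, v⟩ :: s1) SecLevel.L from hlow.symm]
      simp [restrictL, List.mem_filter, hc]
    exact ⟨_, List.mem_of_mem_filter hv, rfl⟩
  obtain ⟨v2, I2x, hq2⟩ := dequeue_exists hmem
  obtain ⟨p2, s2, hI2, hI2', hp2⟩ := dequeue_decomp hq2
  subst hI2; subst hI2'
  have key : restrictL lvl p1 SecLevel.L ++ (⟨c, v⟩ : Vec) :: restrictL lvl s1 SecLevel.L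
      = restrictL lvl p2 SecLevel.L ++ (⟨c, v2⟩ : Vec) :: restrictL lvl s2 SecLevel.L := by
    have h0 := hlow
    simp only [lowEq, restrictL, List.filter_append, List.filter_cons] at h0
    simpa [hc, restrictL] using h0
  have hnp1 : ∀ w ∈ restrictL lvl p1 SecLevel.L, w.ch ≠ c :=
    fun w hw => hp1 w (List.mem_of_mem_filter hw)
  have hnp2 : ∀ w ∈ restrictL lvl p2 SecLevel.L, w.ch ≠ c :=
    fun w hw => hp2 w (List.mem_of_mem_filter hw)
  obtain ⟨e1, e2, e3⟩ := first_split (x := ⟨c, v⟩) (x' := ⟨c, v2⟩) rfl rfl hnp1 hnp2 key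
  have hv2 : v = v2 := by injection e2
  subst hv2
  refine ⟨p2 ++ s2, hq2, ?_⟩
  simp only [lowEq, restrictL, List.filter_append] at e1 e3 ⊢
  rw [show List.filter (fun v => decide (lvl v.ch = SecLevel.L)) p1
      = List.filter (fun v => decide (lvl v.ch = SecLevel.L)) p2 from e1, e3]

lemma dequeue_high {lvl : Chan → SecLevel} {I : Queue} {c : Chan} {v : Val} {I' : Queue}
    (hc : lvl c = SecLevel.H) (h : dequeue I c = some (v, I')) :
    restrictL lvl I' SecLevel.L = restrictL lvl I SecLevel.L ∧ (⟨c, v⟩ : Vec) ∈ I := by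
  obtain ⟨p, s, rfl, rfl, -⟩ := dequeue_decomp h
  refine ⟨?_, by simp⟩
  simp [restrictL, List.filter_append, List.filter_cons, hc]

lemma pstep_det : ∀ {a b c : PConf}, PStep a b → PStep a c → b = c := by
  intro a b c h1
  induction h1 generalizing c with
  | assign => intro h2; cases h2; rfl
  | seqStep h ih =>
    intro h2
    cases h2 with
    | seqStep h' => have := ih h'; simp_all
    | seqSkip => exact absurd h skip_no_step
  | seqSkip =>
    intro h2
    cases h2 with
    | seqStep h' => exact absurd h' skip_no_step
    | seqSkip => rfl
  | iteT he => intro h2; cases h2 with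
    | iteT _ => rfl
    | iteF he' => simp_all
  | iteF he => intro h2; cases h2 with
    | iteT he' => simp_all
    | iteF _ => rfl
  | whileT he => intro h2; cases h2 with
    | whileT _ => rfl
    | whileF he' => simp_all
  | whileF he => intro h2; cases h2 with
    | whileT he' => simp_all
    | whileF _ => rfl
  | inp hq => intro h2; cases h2 with
    | inp hq' => rw [hq] at hq'; simp_all
  | out => intro h2; cases h2; rfl

lemma match_step {lvl : Chan → SecLevel} {vdef : Val} :
    ∀ {c1 c1' : PConf}, PStep c1 c1' →
    ∀ I2 O2 : Queue, lowEq lvl c1.inq I2 → HighDef lvl vdef c1.inq → HighDef lvl vdef I2 →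
    (∃ I2' d, c1'.outq = c1.outq ++ d ∧
        PStep ⟨c1.prg, c1.mem, I2, O2⟩ ⟨c1'.prg, c1'.mem, I2', O2 ++ d⟩ ∧
        lowEq lvl c1'.inq I2' ∧ HighDef lvl vdef c1'.inq ∧ HighDef lvl vdef I2') ∨
    (∀ γ, ¬ PStep ⟨c1.prg, c1.mem, I2, O2⟩ γ) := by
  intro c1 c1' hs
  induction hs with
  | assign =>
    intro I2 O2 hlow h1 h2
    exact Or.inl ⟨I2, [], by simp, by simpa using PStep.assign, hlow, h1, h2⟩
  | seqStep h ih =>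
    intro I2 O2 hlow h1 h2
    rcases ih I2 O2 hlow h1 h2 with ⟨I2', d, hd, hstep, hl, hh1, hh2⟩ | hstuck
    · exact Or.inl ⟨I2', d, hd, PStep.seqStep hstep, hl, hh1, hh2⟩
    · refine Or.inr fun γ hγ => ?_
      cases hγ with
      | seqStep h' => exact hstuck _ h'
      | seqSkip => exact skip_no_step h
  | seqSkip =>
    intro I2 O2 hlow h1 h2
    exact Or.inl ⟨I2, [], by simp, by simpa using PStep.seqSkip, hlow, h1, h2⟩
  | iteT he =>
    intro I2 O2 hlow h1 h2
    exact Or.inl ⟨I2, [], by simp, by simpa using PStep.iteT he, hlow, h1, h2⟩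
  | iteF he =>
    intro I2 O2 hlow h1 h2
    exact Or.inl ⟨I2, [], by simp, by simpa using PStep.iteF he, hlow, h1, h2⟩
  | whileT he =>
    intro I2 O2 hlow h1 h2
    exact Or.inl ⟨I2, [], by simp, by simpa using PStep.whileT he, hlow, h1, h2⟩
  | whileF he =>
    intro I2 O2 hlow h1 h2
    exact Or.inl ⟨I2, [], by simp, by simpa using PStep.whileF he, hlow, h1, h2⟩
  | @inp I c v I' x m O hq =>
    intro I2 O2 hlow h1 h2
    cases hc : lvl c with
    | L =>
      obtain ⟨I2', hq2, hlow'⟩ := dequeue_low hc hlow hq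
      exact Or.inl ⟨I2', [], by simp, by simpa using PStep.inp hq2, hlow',
        fun w hw hh => h1 w (dequeue_subset hq w hw) hh,
        fun w hw hh => h2 w (dequeue_subset hq2 w hw) hh⟩
    | H =>
      cases hq2 : dequeue I2 c with
      | none =>
        refine Or.inr fun γ hγ => ?_
        cases hγ with
        | inp hq' => rw [hq2] at hq'; simp at hq'
      | some p =>
        cases p with | mk v2 I2' =>
        have hv : v = vdef := h1 _ (dequeue_high hc hq).2 hc
        have hv2 : v2 = vdef := h2 _ (dequeue_high hc hq2).2 hc
        subst hv; subst hv2
        refine Or.inl ⟨I2', [], by simp, by simpa using PStep.inp hq2, ?_,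
          fun w hw hh => h1 w (dequeue_subset hq w hw) hh,
          fun w hw hh => h2 w (dequeue_subset hq2 w hw) hh⟩
        show restrictL lvl I' SecLevel.L = restrictL lvl I2' SecLevel.L
        rw [(dequeue_high hc hq).1, (dequeue_high hc hq2).1]
        exact hlow
  | out =>
    intro I2 O2 hlow h1 h2
    exact Or.inl ⟨I2, [⟨_, _⟩], rfl, PStep.out, hlow, h1, h2⟩

lemma sim {lvl : Chan → SecLevel} {vdef : Val} :
    ∀ {γ1 : PConf} {m1 : Mem} {O1f : Queue},
    Relation.ReflTransGen PStep γ1 ⟨.skip, m1, [], O1f⟩ →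
    ∀ {I2 O2 : Queue} {m2 : Mem} {O2f : Queue},
      lowEq lvl γ1.inq I2 → HighDef lvl vdef γ1.inq → HighDef lvl vdef I2 →
      lowEq lvl γ1.outq O2 →
      Relation.ReflTransGen PStep ⟨γ1.prg, γ1.mem, I2, O2⟩ ⟨.skip, m2, [], O2f⟩ →
      lowEq lvl O1f O2f := by
  intro γ1 m1 O1f h
  induction h using Relation.ReflTransGen.head_induction_on with
  | refl =>
    intro I2 O2 m2 O2f hlow h1 h2 hOlow h2run
    rcases Relation.ReflTransGen.cases_head h2run with heq | ⟨γ', hstep, -⟩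
    · injection heq with hp hm hi ho
      subst ho
      exact hOlow
    · exact absurd hstep skip_no_step
  | head hstep hrest ih =>
    rename_i a cmid
    intro I2 O2 m2 O2f hlow h1 h2 hOlow h2run
    rcases match_step (lvl := lvl) (vdef := vdef) hstep I2 O2 hlow h1 h2 with
      ⟨I2', d, hd, hstep2, hl, hh1, hh2⟩ | hstuck
    · rcases Relation.ReflTransGen.cases_head h2run with heq | ⟨γ', hstep2', hrest2⟩
      · injection heq with hp hm hi ho
        have : PStep ⟨Prog.skip, a.mem, a.inq, a.outq⟩ cmid := by
          rw [← hp]; exact hstep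
        exact absurd this skip_no_step
      · have he := pstep_det hstep2' hstep2
        subst he
        refine ih hl hh1 hh2 ?_ hrest2
        show restrictL lvl cmid.outq SecLevel.L = restrictL lvl (O2 ++ d) SecLevel.L
        rw [hd]
        simp only [restrictL, List.filter_append]
        rw [show List.filter (fun v => decide (lvl v.ch = SecLevel.L)) a.outq
            = List.filter (fun v => decide (lvl v.ch = SecLevel.L)) O2 from hOlow]
    · rcases Relation.ReflTransGen.cases_head h2run with heq | ⟨γ', hstep2', hrest2⟩
      · injection heq with hp hm hi ho
        have : PStep ⟨Prog.skip, a.mem, a.inq, a.outq⟩ cmid := by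
          rw [← hp]; exact hstep
        exact absurd this skip_no_step
      · exact absurd hstep2' (hstuck _)

end MapReduce

namespace MapReduce

/-- **Removal of inputs implies termination-insensitive non-interference.**
Every program π of the while-language that satisfies removal of inputs also
satisfies termination-insensitive non-interference. -/
theorem RI_implies_TINI (lvl : Chan → SecLevel) (p : Prog) (h : RI lvl p) :
    TINI lvl p := by
  intro I I' O O' hII' hB hB'
  obtain ⟨I1, O1, hI1, hHD1, -, hB1, hO1⟩ := h (Val.nat 0) I O hB
  obtain ⟨I2, O2, hI2, hHD2, -, hB2, hO2⟩ := h (Val.nat 0) I' O' hB'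
  obtain ⟨m1, hr1⟩ := hB1
  obtain ⟨m2, hr2⟩ := hB2
  have h12 : lowEq lvl I1 I2 := by
    show restrictL lvl I1 SecLevel.L = restrictL lvl I2 SecLevel.L
    rw [show restrictL lvl I1 SecLevel.L = restrictL lvl I SecLevel.L from hI1,
        show restrictL lvl I SecLevel.L = restrictL lvl I' SecLevel.L from hII',
        show restrictL lvl I' SecLevel.L = restrictL lvl I2 SecLevel.L from hI2.symm]
  have key : lowEq lvl O1 O2 :=
    sim (lvl := lvl) (vdef := Val.nat 0) hr1 h12 hHD1 hHD2 rfl hr2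
  show restrictL lvl O SecLevel.L = restrictL lvl O' SecLevel.L
  rw [show restrictL lvl O SecLevel.L = restrictL lvl O1 SecLevel.L from hO1.symm,
      show restrictL lvl O1 SecLevel.L = restrictL lvl O2 SecLevel.L from key,
      show restrictL lvl O2 SecLevel.L = restrictL lvl O' SecLevel.L from hO2]

end MapReduce
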